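/- For every Stone adjacency space (X₀, R) there exists a topological space X such that the triple (X, X₀, R) is a 2-precontact space, and X is unique up to homeomorphism: if (X, X₀, R) and (X₁, X₀, R) are both 2-precontact spaces then X and X₁ are homeomorphic. Moreover, such an X is a compact semiregular T₀-space. -/

import Mathlib

open TopologicalSpace

/-- The relation `C#` associated to a precontact relation `C`. -/
def CSharp {B : Type*} [BooleanAlgebra B] (C : B → B → Prop) (a b : B) : Prop :=
  C a b ∨ C b a ∨ a ⊓ b ≠ ⊥

/-- A clan of a precontact algebra `(B,C)`. -/
def IsClan {B : Type*} [BooleanAlgebra B] (C : B → B → Prop) (Γ : Set B) : Prop :=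
  Γ.Nonempty ∧ ⊥ ∉ Γ ∧ (∀ a ∈ Γ, ∀ b : B, a ≤ b → b ∈ Γ) ∧
    (∀ a b : B, a ⊔ b ∈ Γ → a ∈ Γ ∨ b ∈ Γ) ∧
    (∀ a ∈ Γ, ∀ b ∈ Γ, CSharp C a b)

/-- For a clopen subset `A` of the subspace `X₀`, its closure `cl_X A` in the ambient space. -/
def embCl {X : Type*} [TopologicalSpace X] (X₀ : Set X) (A : Clopens ↥X₀) : Set X :=
  closure (Subtype.val '' (A : Set ↥X₀))

/-- The precontact relation `C_R` on `CO(X₀)` induced by an adjacency relation `R` on `X₀`. -/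
def clopCR {X : Type*} [TopologicalSpace X] {X₀ : Set X}
    (R : ↥X₀ → ↥X₀ → Prop) (A B : Clopens ↥X₀) : Prop :=
  ∃ x ∈ (A : Set ↥X₀), ∃ y ∈ (B : Set ↥X₀), R x y

/-- A 2-precontact space `(X, X₀, R)`. -/
structure TwoPrecontact (X : Type*) [TopologicalSpace X] (X₀ : Set X)
    (R : ↥X₀ → ↥X₀ → Prop) : Prop where
  /-- (PCS1): `X₀` is dense in `X` -/
  dense : Dense X₀
  /-- (PCS1): `X` is a `T₀`-space -/
  t0 : T0Space X
  /-- (PCS2): `X₀` is compact -/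
  compact₀ : CompactSpace ↥X₀
  /-- (PCS2): `X₀` is Hausdorff -/
  t2₀ : T2Space ↥X₀
  /-- (PCS2): `X₀` is zero-dimensional -/
  zdim₀ : IsTopologicalBasis {s : Set ↥X₀ | IsClopen s}
  /-- (PCS2): `R` is a closed relation on `X₀` -/
  closedR : IsClosed {p : ↥X₀ × ↥X₀ | R p.1 p.2}
  /-- (PCS3): `RC(X,X₀)` is a closed base for `X` -/
  base : ∀ U : Set X, IsOpen U → ∀ x ∈ U,
    ∃ A : Clopens ↥X₀, x ∈ (embCl X₀ A)ᶜ ∧ (embCl X₀ A)ᶜ ⊆ U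
  /-- (PCS4) -/
  pcs4 : ∀ A B : Clopens ↥X₀, (embCl X₀ A ∩ embCl X₀ B).Nonempty →
    CSharp (clopCR R) A B
  /-- (PCS5): every clan of `(CO(X₀), C_R)` is of the form `Γ_{x,X₀}` -/
  pcs5 : ∀ Γ : Set (Clopens ↥X₀), IsClan (clopCR R) Γ →
    ∃ x : X, Γ = {A : Clopens ↥X₀ | x ∈ embCl X₀ A}

/-- A set is regular closed if it equals the closure of its interior. -/
def IsRC {X : Type*} [TopologicalSpace X] (F : Set X) : Prop :=
  F = closure (interior F)

/-- A space is semiregular if its regular closed sets form a closed base. -/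
def Semiregular (X : Type*) [TopologicalSpace X] : Prop :=
  ∀ U : Set X, IsOpen U → ∀ x ∈ U, ∃ F : Set X, IsRC F ∧ x ∉ F ∧ Fᶜ ⊆ U

universe u
section ClanIso
variable {B B' : Type*} [BooleanAlgebra B] [BooleanAlgebra B']

theorem IsClan.top_mem {C : B → B → Prop} {Γ : Set B} (h : IsClan C Γ) : ⊤ ∈ Γ := by
  obtain ⟨a, ha⟩ := h.1
  exact h.2.2.1 a ha ⊤ le_top

theorem isClan_map (τ : B ≃o B') {C : B → B → Prop} {C' : B' → B' → Prop}
    (hC : ∀ a b, C' (τ a) (τ b) ↔ C a b) {Γ : Set B} (h : IsClan C Γ) :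
    IsClan C' (τ '' Γ) := by
  obtain ⟨hne, hbot, hup, hprime, hsharp⟩ := h
  refine ⟨hne.image τ, ?_, ?_, ?_, ?_⟩
  · rintro ⟨a, ha, hτa⟩
    rw [← τ.map_bot] at hτa
    exact hbot (τ.injective hτa ▸ ha)
  · rintro a' ⟨a, ha, rfl⟩ b' hle
    exact ⟨τ.symm b', hup a ha _ (by simpa using (τ.le_iff_le.1 (by simpa using hle))), by simp⟩
  · intro a' b' hmem
    rcases hmem with ⟨c, hc, hτc⟩
    have : τ.symm a' ⊔ τ.symm b' ∈ Γ := by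
      have : c = τ.symm a' ⊔ τ.symm b' := by
        apply τ.injective
        rw [hτc, map_sup]
        simp
      rwa [← this]
    rcases hprime _ _ this with h1 | h1
    · exact Or.inl ⟨_, h1, by simp⟩
    · exact Or.inr ⟨_, h1, by simp⟩
  · rintro a' ⟨a, ha, rfl⟩ b' ⟨b, hb, rfl⟩
    rcases hsharp a ha b hb with h1 | h1 | h1
    · exact Or.inl ((hC a b).2 h1)
    · exact Or.inr (Or.inl ((hC b a).2 h1))
    · refine Or.inr (Or.inr ?_)
      rw [← map_inf, ← τ.map_bot]
      exact fun hh => h1 (τ.injective hh)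

theorem isClan_iff (τ : B ≃o B') {C : B → B → Prop} {C' : B' → B' → Prop}
    (hC : ∀ a b, C' (τ a) (τ b) ↔ C a b) {Γ : Set B} :
    IsClan C Γ ↔ IsClan C' (τ '' Γ) := by
  refine ⟨isClan_map τ hC, fun h => ?_⟩
  have hC' : ∀ a' b', C (τ.symm a') (τ.symm b') ↔ C' a' b' := by
    intro a' b'
    simpa using (hC (τ.symm a') (τ.symm b')).symm
  have := isClan_map τ.symm hC' h
  rwa [Set.image_image, show ((fun a => τ.symm (τ a)) '' Γ) = Γ by simp] at this

end ClanIso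
section ClopensMap
variable {X Y : Type*} [TopologicalSpace X] [TopologicalSpace Y]

def clopensMap (h : X ≃ₜ Y) : Clopens X ≃o Clopens Y where
  toFun A := ⟨h '' A, by
    rw [show (⇑h '' (A : Set X)) = h.symm ⁻¹' A from (h.toEquiv.image_eq_preimage_symm A)]
    exact A.2.preimage h.symm.continuous⟩
  invFun B := ⟨h ⁻¹' B, B.2.preimage h.continuous⟩
  left_inv A := by ext x; simp
  right_inv B := by ext y; simp
  map_rel_iff' {A B} := by
    constructor
    · intro hle x hx
      have : h x ∈ h '' (B : Set X) := hle ⟨x, hx, rfl⟩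
      rcases this with ⟨y, hy, hxy⟩
      rwa [← h.injective hxy]
    · intro hle
      exact Set.image_mono hle

@[simp] theorem clopensMap_coe (h : X ≃ₜ Y) (A : Clopens X) :
    ((clopensMap h A : Clopens Y) : Set Y) = h '' A := rfl

@[simp] theorem mem_clopensMap (h : X ≃ₜ Y) (A : Clopens X) (y : Y) :
    y ∈ clopensMap h A ↔ h.symm y ∈ A := by
  constructor
  · rintro ⟨x, hx, rfl⟩; simpa using hx
  · intro hx; exact ⟨h.symm y, hx, by simp⟩

end ClopensMap
section TPCDef

open Topology Set TopologicalSpace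

variable {X₀ : Type u} [TopologicalSpace X₀]

/-- The precontact relation on `Clopens X₀` induced directly by `R`. -/
def CR (R : X₀ → X₀ → Prop) (A B : Clopens X₀) : Prop :=
  ∃ x ∈ (A : Set X₀), ∃ y ∈ (B : Set X₀), R x y

/-- `X₀`-based reformulation of a 2-precontact space. -/
structure TPC (R : X₀ → X₀ → Prop) (X : Type u) [TopologicalSpace X] (e : X₀ → X) : Prop where
  emb : Topology.IsEmbedding e
  dense : DenseRange e
  t0 : T0Space X
  base : ∀ U : Set X, IsOpen U → ∀ x ∈ U, ∃ A : Clopens X₀,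
    x ∉ closure (e '' (A : Set X₀)) ∧ (closure (e '' (A : Set X₀)))ᶜ ⊆ U
  pcs4 : ∀ A B : Clopens X₀,
    (closure (e '' (A : Set X₀)) ∩ closure (e '' (B : Set X₀))).Nonempty → CSharp (CR R) A B
  pcs5 : ∀ Γ : Set (Clopens X₀), IsClan (CR R) Γ →
    ∃ x : X, Γ = {A : Clopens X₀ | x ∈ closure (e '' (A : Set X₀))}

variable {X : Type u} [TopologicalSpace X] {e : X₀ → X} {R : X₀ → X₀ → Prop}

section Translate

variable (emb : Topology.IsEmbedding e)

/-- The clopens transport along the homeomorphism `X₀ ≃ₜ range e`. -/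
noncomputable def tau (emb : Topology.IsEmbedding e) : Clopens X₀ ≃o Clopens ↥(Set.range e) :=
  clopensMap (Topology.IsEmbedding.toHomeomorph emb)

theorem coe_hOf (x : X₀) : ((Topology.IsEmbedding.toHomeomorph emb) x : X) = e x := rfl

theorem val_image_tau (A : Clopens X₀) :
    Subtype.val '' ((tau emb A : Clopens ↥(Set.range e)) : Set ↥(Set.range e)) = e '' A := by
  rw [tau, clopensMap_coe, Set.image_image]
  rfl

theorem embCl_tau (A : Clopens X₀) :
    embCl (Set.range e) (tau emb A) = closure (e '' (A : Set X₀)) := by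
  rw [embCl, val_image_tau]

theorem crIff (A B : Clopens X₀) :
    clopCR (fun u v : ↥(Set.range e) => ∃ x y : X₀, R x y ∧ e x = ↑u ∧ e y = ↑v)
      (tau emb A) (tau emb B) ↔ CR R A B := by
  constructor
  · rintro ⟨u, hu, v, hv, x, y, hxy, hex, hey⟩
    rw [tau, clopensMap_coe] at hu hv
    obtain ⟨a, ha, rfl⟩ := hu
    obtain ⟨b, hb, rfl⟩ := hv
    rw [coe_hOf] at hex
    rw [coe_hOf] at hey
    exact ⟨x, by rwa [← emb.injective hex] at ha, y, by rwa [← emb.injective hey] at hb, hxy⟩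
  · rintro ⟨x, hx, y, hy, hxy⟩
    refine ⟨(Topology.IsEmbedding.toHomeomorph emb) x, ?_, (Topology.IsEmbedding.toHomeomorph emb) y, ?_,
      x, y, hxy, rfl, rfl⟩
    · rw [tau]; exact Set.mem_image_of_mem _ hx
    · rw [tau]; exact Set.mem_image_of_mem _ hy

theorem csharpIff (A B : Clopens X₀) :
    CSharp (clopCR (fun u v : ↥(Set.range e) => ∃ x y : X₀, R x y ∧ e x = ↑u ∧ e y = ↑v))
      (tau emb A) (tau emb B) ↔ CSharp (CR R) A B := by
  unfold CSharp
  rw [crIff emb, crIff emb]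
  have : tau emb A ⊓ tau emb B ≠ ⊥ ↔ A ⊓ B ≠ ⊥ := by
    rw [← map_inf, ← (tau emb).map_bot, (tau emb).injective.ne_iff]
  rw [this]

theorem tpc_of_two (emb : Topology.IsEmbedding e) (T : TwoPrecontact X (Set.range e)
      (fun u v => ∃ x y : X₀, R x y ∧ e x = ↑u ∧ e y = ↑v)) : TPC R X e where
  emb := emb
  dense := T.dense
  t0 := T.t0
  base := by
    intro U hU x hx
    obtain ⟨A', h1, h2⟩ := T.base U hU x hx
    refine ⟨(tau emb).symm A', ?_, ?_⟩
    · rw [← embCl_tau emb, (tau emb).apply_symm_apply]; exact h1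
    · rw [← embCl_tau emb, (tau emb).apply_symm_apply]; exact h2
  pcs4 := by
    intro A B hne
    exact (csharpIff emb A B).1 <| T.pcs4 (tau emb A) (tau emb B)
      (by rw [embCl_tau emb, embCl_tau emb]; exact hne)
  pcs5 := by
    intro Γ hΓ
    have hΓ' := (isClan_iff (tau emb) (crIff emb)).1 hΓ
    obtain ⟨x, hx⟩ := T.pcs5 _ hΓ'
    refine ⟨x, ?_⟩
    ext A
    rw [show (A ∈ Γ) ↔ tau emb A ∈ (tau emb) '' Γ from
      ((tau emb).injective.mem_set_image).symm, hx]
    show x ∈ embCl (Set.range e) (tau emb A) ↔ _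
    rw [embCl_tau emb]
    rfl

end Translate

end TPCDef
section Reverse

open Topology Set TopologicalSpace

variable {X₀ : Type u} [TopologicalSpace X₀]
variable {X : Type u} [TopologicalSpace X] {e : X₀ → X} {R : X₀ → X₀ → Prop}

theorem basis_clopens_image {Y : Type u} [TopologicalSpace Y] (h : X₀ ≃ₜ Y)
    (hz : IsTopologicalBasis {s : Set X₀ | IsClopen s}) :
    IsTopologicalBasis {s : Set Y | IsClopen s} := by
  refine isTopologicalBasis_of_isOpen_of_nhds (fun u hu => hu.isOpen) ?_
  intro y U hyU hU
  obtain ⟨v, hv, hxv, hvU⟩ := hz.exists_subset_of_mem_open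
    (show h.symm y ∈ h ⁻¹' U by simp [hyU]) (hU.preimage h.continuous)
  refine ⟨h '' v, ?_, ⟨h.symm y, hxv, h.apply_symm_apply y⟩, ?_⟩
  · show IsClopen (h '' v)
    rw [show (⇑h '' v) = h.symm ⁻¹' v from (h.toEquiv.image_eq_preimage_symm v)]
    exact hv.preimage h.symm.continuous
  · rintro z ⟨w, hw, rfl⟩
    exact hvU hw

theorem two_of_tpc (tpc : TPC R X e) [CompactSpace X₀] [T2Space X₀]
    (hz : IsTopologicalBasis {s : Set X₀ | IsClopen s})
    (hR : IsClosed {p : X₀ × X₀ | R p.1 p.2}) :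
    TwoPrecontact X (Set.range e)
      (fun u v => ∃ x y : X₀, R x y ∧ e x = ↑u ∧ e y = ↑v) := by
  have emb := tpc.emb
  set h : X₀ ≃ₜ ↥(Set.range e) := Topology.IsEmbedding.toHomeomorph emb with hh
  refine ⟨tpc.dense, tpc.t0, h.compactSpace, h.symm.isEmbedding.t2Space,
    basis_clopens_image h hz, ?_, ?_, ?_, ?_⟩
  · -- closedR
    have hset : {p : ↥(Set.range e) × ↥(Set.range e) |
        ∃ x y : X₀, R x y ∧ e x = ↑p.1 ∧ e y = ↑p.2} =
        (Prod.map h.symm h.symm) ⁻¹' {p : X₀ × X₀ | R p.1 p.2} := by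
      ext ⟨u, v⟩
      constructor
      · rintro ⟨x, y, hxy, hex, hey⟩
        have hxu : h x = u := Subtype.ext hex
        have hyv : h y = v := Subtype.ext hey
        show R (h.symm u) (h.symm v)
        rw [← hxu, ← hyv, h.symm_apply_apply, h.symm_apply_apply]
        exact hxy
      · intro hp
        exact ⟨h.symm u, h.symm v, hp, congrArg Subtype.val (h.apply_symm_apply u),
          congrArg Subtype.val (h.apply_symm_apply v)⟩
    rw [hset]
    exact hR.preimage (h.symm.continuous.prodMap h.symm.continuous)
  · -- base
    intro U hU x hx
    obtain ⟨A, h1, h2⟩ := tpc.base U hU x hx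
    exact ⟨tau emb A, by rw [embCl_tau emb]; exact h1, by rw [embCl_tau emb]; exact h2⟩
  · -- pcs4
    intro A' B' hne
    have e1 : tau emb ((tau emb).symm A') = A' := (tau emb).apply_symm_apply A'
    have e2 : tau emb ((tau emb).symm B') = B' := (tau emb).apply_symm_apply B'
    rw [← e1, ← e2] at hne ⊢
    rw [embCl_tau emb, embCl_tau emb] at hne
    exact (csharpIff emb _ _).2 (tpc.pcs4 _ _ hne)
  · -- pcs5
    intro Γ' hΓ'
    have hcl : IsClan (CR R) ((tau emb).symm '' Γ') := by
      rw [isClan_iff (tau emb) (crIff emb), Set.image_image]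
      simpa using hΓ'
    obtain ⟨x, hx⟩ := tpc.pcs5 _ hcl
    refine ⟨x, ?_⟩
    ext A'
    rw [show (A' ∈ Γ') ↔ (tau emb).symm A' ∈ (tau emb).symm '' Γ' from
      ((tau emb).symm.injective.mem_set_image).symm, hx]
    show x ∈ closure (e '' ((tau emb).symm A' : Set X₀)) ↔ x ∈ embCl (Set.range e) A'
    rw [← embCl_tau emb, (tau emb).apply_symm_apply]

end Reverse
section Consequences

open Topology Set TopologicalSpace

variable {X₀ : Type u} [TopologicalSpace X₀]
variable {X : Type u} [TopologicalSpace X] {e : X₀ → X} {R : X₀ → X₀ → Prop}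

theorem closure_image_top (hd : DenseRange e) :
    closure (e '' ((⊤ : Clopens X₀) : Set X₀)) = univ := by
  have : ((⊤ : Clopens X₀) : Set X₀) = univ := rfl
  rw [this, Set.image_univ]
  exact hd.closure_eq

theorem closure_image_sup (A B : Clopens X₀) :
    closure (e '' ((A ⊔ B : Clopens X₀) : Set X₀)) =
      closure (e '' (A : Set X₀)) ∪ closure (e '' (B : Set X₀)) := by
  have : ((A ⊔ B : Clopens X₀) : Set X₀) = (A : Set X₀) ∪ (B : Set X₀) := rfl
  rw [this, Set.image_union, closure_union]

theorem TPC.gamma_isClan (tpc : TPC R X e) (x : X) :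
    IsClan (CR R) {A : Clopens X₀ | x ∈ closure (e '' (A : Set X₀))} := by
  refine ⟨⟨⊤, ?_⟩, ?_, ?_, ?_, ?_⟩
  · show x ∈ closure (e '' ((⊤ : Clopens X₀) : Set X₀))
    rw [closure_image_top tpc.dense]; trivial
  · show x ∉ closure (e '' ((⊥ : Clopens X₀) : Set X₀))
    have : ((⊥ : Clopens X₀) : Set X₀) = ∅ := rfl
    simp [this]
  · intro A hA B hAB
    exact closure_mono (Set.image_mono (f := e) hAB) hA
  · intro A B hmem
    have := hmem
    rw [Set.mem_setOf_eq, closure_image_sup] at this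
    exact this
  · intro A hA B hB
    exact tpc.pcs4 A B ⟨x, hA, hB⟩

theorem TPC.inj_gamma (tpc : TPC R X e) {x y : X}
    (hxy : {A : Clopens X₀ | x ∈ closure (e '' (A : Set X₀))} =
      {A : Clopens X₀ | y ∈ closure (e '' (A : Set X₀))}) : x = y := by
  have := tpc.t0
  have key : ∀ x y : X, {A : Clopens X₀ | x ∈ closure (e '' (A : Set X₀))} =
      {A : Clopens X₀ | y ∈ closure (e '' (A : Set X₀))} →
      ∀ U : Set X, IsOpen U → x ∈ U → y ∈ U := by
    intro x y hxy U hU hx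
    obtain ⟨A, h1, h2⟩ := tpc.base U hU x hx
    apply h2
    intro hmem
    have : A ∈ {A : Clopens X₀ | x ∈ closure (e '' (A : Set X₀))} := by
      rw [hxy]; exact hmem
    exact h1 this
  refine Inseparable.eq ?_
  rw [inseparable_iff_forall_isOpen]
  intro U hU
  exact ⟨key x y hxy U hU, key y x hxy.symm U hU⟩

theorem TPC.compactSpace (tpc : TPC R X e) : CompactSpace X := by
  refine ⟨isCompact_iff_ultrafilter_le_nhds.2 ?_⟩
  intro f _
  have hclan : IsClan (CR R) {A : Clopens X₀ | closure (e '' (A : Set X₀)) ∈ f} := by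
    refine ⟨⟨⊤, ?_⟩, ?_, ?_, ?_, ?_⟩
    · show closure (e '' ((⊤ : Clopens X₀) : Set X₀)) ∈ f
      rw [closure_image_top tpc.dense]; exact Filter.univ_mem
    · show closure (e '' ((⊥ : Clopens X₀) : Set X₀)) ∉ f
      have : ((⊥ : Clopens X₀) : Set X₀) = ∅ := rfl
      simp [this]
    · intro A hA B hAB
      exact Filter.mem_of_superset hA (closure_mono (Set.image_mono (f := e) hAB))
    · intro A B hmem
      rw [Set.mem_setOf_eq, closure_image_sup] at hmem
      exact (Ultrafilter.union_mem_iff.1 hmem).imp id id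
    · intro A hA B hB
      exact tpc.pcs4 A B (Ultrafilter.nonempty_of_mem (Filter.inter_mem hA hB))
  obtain ⟨x, hx⟩ := tpc.pcs5 _ hclan
  refine ⟨x, trivial, ?_⟩
  intro s hs
  obtain ⟨U, hUs, hU, hxU⟩ := mem_nhds_iff.1 hs
  obtain ⟨A, h1, h2⟩ := tpc.base U hU x hxU
  have hA : A ∉ {A : Clopens X₀ | closure (e '' (A : Set X₀)) ∈ f} := by
    rw [hx]; exact h1
  have : (closure (e '' (A : Set X₀)))ᶜ ∈ f := Ultrafilter.compl_mem_iff_notMem.2 hA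
  exact Filter.mem_of_superset this (h2.trans hUs)

theorem isRC_closure_isOpen {U : Set X} (hU : IsOpen U) : IsRC (closure U) := by
  refine subset_antisymm ?_ ?_
  · exact closure_mono (interior_maximal subset_closure hU)
  · calc closure (interior (closure U)) ⊆ closure (closure U) := closure_mono interior_subset
      _ = closure U := closure_closure

theorem TPC.isRC_closure_image (tpc : TPC R X e) (A : Clopens X₀) :
    IsRC (closure (e '' (A : Set X₀))) := by
  have emb := tpc.emb
  set h : X₀ ≃ₜ ↥(Set.range e) := Topology.IsEmbedding.toHomeomorph emb with hh
  have hopen : IsOpen ((tau emb A : Clopens ↥(Set.range e)) : Set ↥(Set.range e)) :=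
    (tau emb A).2.isOpen
  obtain ⟨U, hU, hpre⟩ := isOpen_induced_iff.1 hopen
  have himg : e '' (A : Set X₀) = U ∩ Set.range e := by
    rw [← val_image_tau emb A, ← hpre, Set.image_preimage_eq_inter_range,
      Subtype.range_coe]
  have hcl : closure (e '' (A : Set X₀)) = closure U := by
    rw [himg]
    refine subset_antisymm (closure_mono Set.inter_subset_left) ?_
    have : U ⊆ closure (U ∩ Set.range e) := tpc.dense.open_subset_closure_inter hU
    calc closure U ⊆ closure (closure (U ∩ Set.range e)) := closure_mono this
      _ = closure (U ∩ Set.range e) := closure_closure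
  rw [hcl]
  exact isRC_closure_isOpen hU

theorem TPC.semiregular (tpc : TPC R X e) : Semiregular X := by
  intro U hU x hx
  obtain ⟨A, h1, h2⟩ := tpc.base U hU x hx
  exact ⟨closure (e '' (A : Set X₀)), tpc.isRC_closure_image A, h1, h2⟩

theorem TPC.homeo (t1 : TPC R X e) {X₁ : Type u} [TopologicalSpace X₁] {e₁ : X₀ → X₁}
    (t2 : TPC R X₁ e₁) : Nonempty (X ≃ₜ X₁) := by
  choose φ hφ using fun x : X => t2.pcs5 _ (t1.gamma_isClan x)
  choose ψ hψ using fun y : X₁ => t1.pcs5 _ (t2.gamma_isClan y)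
  have hretr : ∀ x, ψ (φ x) = x := fun x =>
    t1.inj_gamma ((hψ (φ x)).symm.trans (hφ x).symm)
  have hsec : ∀ y, φ (ψ y) = y := fun y =>
    t2.inj_gamma ((hφ (ψ y)).symm.trans (hψ y).symm)
  have hc : ∀ (x : X) (A : Clopens X₀),
      x ∈ closure (e '' (A : Set X₀)) ↔ φ x ∈ closure (e₁ '' (A : Set X₀)) :=
    fun x A => Set.ext_iff.1 (hφ x) A
  have hd : ∀ (y : X₁) (A : Clopens X₀),
      y ∈ closure (e₁ '' (A : Set X₀)) ↔ ψ y ∈ closure (e '' (A : Set X₀)) :=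
    fun y A => Set.ext_iff.1 (hψ y) A
  have hcontφ : Continuous φ := by
    rw [continuous_def]
    intro U hU
    rw [isOpen_iff_forall_mem_open]
    intro x hx
    obtain ⟨A, h1, h2⟩ := t2.base U hU (φ x) hx
    refine ⟨(closure (e '' (A : Set X₀)))ᶜ, ?_, isClosed_closure.isOpen_compl, ?_⟩
    · intro z hz
      show φ z ∈ U
      exact h2 fun hmem => hz ((hc z A).2 hmem)
    · exact fun hmem => h1 ((hc x A).1 hmem)
  have hcontψ : Continuous ψ := by
    rw [continuous_def]
    intro U hU
    rw [isOpen_iff_forall_mem_open]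
    intro y hy
    obtain ⟨A, h1, h2⟩ := t1.base U hU (ψ y) hy
    refine ⟨(closure (e₁ '' (A : Set X₀)))ᶜ, ?_, isClosed_closure.isOpen_compl, ?_⟩
    · intro z hz
      show ψ z ∈ U
      exact h2 fun hmem => hz ((hd z A).2 hmem)
    · exact fun hmem => h1 ((hd y A).1 hmem)
  exact ⟨⟨⟨φ, ψ, hretr, hsec⟩, hcontφ, hcontψ⟩⟩

end Consequences
section Canonical

open Topology Set TopologicalSpace

variable {X₀ : Type u} [TopologicalSpace X₀]

/-- The canonical space: points are clans of `(Clopens X₀, C_R)`. -/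
def ClanPt (R : X₀ → X₀ → Prop) : Type u := {Γ : Set (Clopens X₀) // IsClan (CR R) Γ}

variable (R : X₀ → X₀ → Prop)

/-- Basic closed sets of the canonical space. -/
def gg (A : Clopens X₀) : Set (ClanPt R) := {Γ | A ∈ Γ.1}

instance clanTop : TopologicalSpace (ClanPt R) :=
  generateFrom {U | ∃ A : Clopens X₀, U = (gg R A)ᶜ}

variable {R}

theorem gg_top : gg R ⊤ = univ :=
  Set.eq_univ_of_forall fun Γ => Γ.2.top_mem

theorem gg_bot : gg R ⊥ = ∅ :=
  Set.eq_empty_of_forall_notMem fun Γ h => Γ.2.2.1 h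

theorem gg_sup (A B : Clopens X₀) : gg R (A ⊔ B) = gg R A ∪ gg R B := by
  ext Γ
  constructor
  · intro h
    exact Γ.2.2.2.2.1 A B h
  · rintro (h | h)
    · exact Γ.2.2.2.1 A h _ le_sup_left
    · exact Γ.2.2.2.1 B h _ le_sup_right

theorem isOpen_gg_compl (A : Clopens X₀) : IsOpen ((gg R A)ᶜ) :=
  TopologicalSpace.GenerateOpen.basic _ ⟨A, rfl⟩

theorem isClosed_gg (A : Clopens X₀) : IsClosed (gg R A) :=
  ⟨isOpen_gg_compl A⟩

theorem clan_basis : IsTopologicalBasis {U : Set (ClanPt R) | ∃ A : Clopens X₀, U = (gg R A)ᶜ} := by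
  refine ⟨?_, ?_, rfl⟩
  · rintro t₁ ⟨A, rfl⟩ t₂ ⟨B, rfl⟩ Γ hΓ
    refine ⟨(gg R (A ⊔ B))ᶜ, ⟨A ⊔ B, rfl⟩, ?_, ?_⟩
    · rw [gg_sup, Set.compl_union]; exact hΓ
    · rw [gg_sup, Set.compl_union]
  · apply Set.eq_univ_of_forall
    intro Γ
    exact ⟨(gg R ⊥)ᶜ, ⟨⊥, rfl⟩, by rw [gg_bot]; simp⟩

/-- The canonical embedding of `X₀` into the clan space. -/
def ePt (R : X₀ → X₀ → Prop) (x : X₀) : ClanPt R :=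
  ⟨{A : Clopens X₀ | x ∈ A}, by
    refine ⟨⟨⊤, trivial⟩, ?_, ?_, ?_, ?_⟩
    · intro h
      exact h
    · intro A hA B hAB
      exact hAB hA
    · intro A B h
      exact h
    · intro A hA B hB
      refine Or.inr (Or.inr ?_)
      intro hbot
      have : x ∈ A ⊓ B := ⟨hA, hB⟩
      rw [hbot] at this
      exact this⟩

theorem ePt_preimage_gg (A : Clopens X₀) : ePt R ⁻¹' (gg R A) = (A : Set X₀) := rfl

theorem gg_eq_closure (A : Clopens X₀) : closure (ePt R '' (A : Set X₀)) = gg R A := by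
  refine subset_antisymm (closure_minimal ?_ (isClosed_gg A)) ?_
  · rintro Γ ⟨x, hx, rfl⟩
    exact hx
  · intro Γ hΓ
    rw [clan_basis.mem_closure_iff]
    rintro o ⟨B, rfl⟩ hΓo
    have hnle : ¬ A ≤ B := by
      intro hle
      exact hΓo (Γ.2.2.2.1 A hΓ B hle)
    obtain ⟨x, hxA, hxB⟩ := Set.not_subset.1 fun h => hnle h
    exact ⟨ePt R x, hxB, ⟨x, hxA, rfl⟩⟩

theorem compl_clopens_eq (X₀ : Type u) [TopologicalSpace X₀] :
    {s : Set X₀ | ∃ A : Clopens X₀, s = (↑A)ᶜ} = {s : Set X₀ | IsClopen s} := by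
  ext s
  constructor
  · rintro ⟨A, rfl⟩
    exact A.2.compl
  · intro hs
    exact ⟨⟨sᶜ, hs.compl⟩, by simp⟩

theorem ePt_injective [T2Space X₀] (hz : IsTopologicalBasis {s : Set X₀ | IsClopen s}) :
    Function.Injective (ePt R) := by
  intro x y hxy
  by_contra hne
  obtain ⟨U, V, hU, hV, hxU, hyV, hdisj⟩ := t2_separation hne
  obtain ⟨s, hs, hxs, hsU⟩ := hz.exists_subset_of_mem_open hxU hU
  have hxA : x ∈ (⟨s, hs⟩ : Clopens X₀) := hxs
  have hyA : y ∉ (⟨s, hs⟩ : Clopens X₀) := by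
    intro hy
    exact (Set.disjoint_left.1 hdisj) (hsU hy) hyV
  have : (⟨s, hs⟩ : Clopens X₀) ∈ (ePt R x).1 ↔ (⟨s, hs⟩ : Clopens X₀) ∈ (ePt R y).1 := by
    rw [hxy]
  exact hyA (this.1 hxA)

theorem ePt_isEmbedding [T2Space X₀] (hz : IsTopologicalBasis {s : Set X₀ | IsClopen s}) :
    Topology.IsEmbedding (ePt R) := by
  refine ⟨⟨?_⟩, ePt_injective hz⟩
  rw [show (clanTop R) = generateFrom {U | ∃ A : Clopens X₀, U = (gg R A)ᶜ} from rfl,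
    induced_generateFrom_eq]
  have himg : (Set.preimage (ePt R)) '' {U | ∃ A : Clopens X₀, U = (gg R A)ᶜ} =
      {s : Set X₀ | ∃ A : Clopens X₀, s = (↑A)ᶜ} := by
    ext s
    constructor
    · rintro ⟨U, ⟨A, rfl⟩, rfl⟩
      exact ⟨A, by rw [Set.preimage_compl, ePt_preimage_gg]⟩
    · rintro ⟨A, rfl⟩
      exact ⟨(gg R A)ᶜ, ⟨A, rfl⟩, by rw [Set.preimage_compl, ePt_preimage_gg]⟩
  rw [himg, compl_clopens_eq, ← hz.eq_generateFrom]

theorem ePt_denseRange : DenseRange (ePt R) := by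
  rw [DenseRange, clan_basis.dense_iff]
  rintro o ⟨A, rfl⟩ ⟨Γ, hΓ⟩
  have hA : A ≠ ⊤ := by
    rintro rfl
    exact hΓ Γ.2.top_mem
  have : (A : Set X₀) ≠ univ := by
    intro h
    apply hA
    apply SetLike.coe_injective
    rw [h]
    rfl
  obtain ⟨x, hx⟩ := (Set.ne_univ_iff_exists_notMem _).1 this
  exact ⟨ePt R x, hx, Set.mem_range_self x⟩

theorem clan_t0 : T0Space (ClanPt R) := by
  refine ⟨fun Γ Δ h => ?_⟩
  rw [inseparable_iff_forall_isOpen] at h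
  apply Subtype.ext
  ext A
  have := h _ (isOpen_gg_compl (R := R) A)
  simpa [gg] using not_iff_not.1 this

theorem clan_tpc [T2Space X₀] (hz : IsTopologicalBasis {s : Set X₀ | IsClopen s}) :
    TPC R (ClanPt R) (ePt R) where
  emb := ePt_isEmbedding hz
  dense := ePt_denseRange
  t0 := clan_t0
  base := by
    intro U hU Γ hΓ
    obtain ⟨o, ⟨A, rfl⟩, hΓo, hoU⟩ := clan_basis.exists_subset_of_mem_open hΓ hU
    exact ⟨A, by rw [gg_eq_closure]; exact hΓo, by rw [gg_eq_closure]; exact hoU⟩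
  pcs4 := by
    intro A B hne
    obtain ⟨Γ, hΓA, hΓB⟩ := hne
    rw [gg_eq_closure] at hΓA hΓB
    exact Γ.2.2.2.2.2 A hΓA B hΓB
  pcs5 := by
    intro Γ hΓ
    refine ⟨⟨Γ, hΓ⟩, ?_⟩
    ext A
    rw [Set.mem_setOf_eq, gg_eq_closure]
    rfl

end Canonical

theorem stmt17 {X₀ : Type u} [TopologicalSpace X₀] [CompactSpace X₀] [T2Space X₀]
    (hz : IsTopologicalBasis {s : Set X₀ | IsClopen s})
    (R : X₀ → X₀ → Prop) (hR : IsClosed {p : X₀ × X₀ | R p.1 p.2}) :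
    -- existence
    (∃ (X : Type u) (_ : TopologicalSpace X) (e : X₀ → X), Topology.IsEmbedding e ∧
      TwoPrecontact X (Set.range e)
        (fun u v => ∃ x y : X₀, R x y ∧ e x = ↑u ∧ e y = ↑v)) ∧
    -- every such `X` is a compact semiregular `T₀`-space
    (∀ (X : Type u) (_ : TopologicalSpace X) (e : X₀ → X), Topology.IsEmbedding e →
      TwoPrecontact X (Set.range e)
        (fun u v => ∃ x y : X₀, R x y ∧ e x = ↑u ∧ e y = ↑v) →
      CompactSpace X ∧ Semiregular X ∧ T0Space X) ∧
    -- uniqueness up to homeomorphism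
    (∀ (X : Type u) (_ : TopologicalSpace X) (e : X₀ → X), Topology.IsEmbedding e →
      TwoPrecontact X (Set.range e)
        (fun u v => ∃ x y : X₀, R x y ∧ e x = ↑u ∧ e y = ↑v) →
      ∀ (X₁ : Type u) (_ : TopologicalSpace X₁) (e₁ : X₀ → X₁), Topology.IsEmbedding e₁ →
        TwoPrecontact X₁ (Set.range e₁)
          (fun u v => ∃ x y : X₀, R x y ∧ e₁ x = ↑u ∧ e₁ y = ↑v) →
        Nonempty (X ≃ₜ X₁)) := by
  refine ⟨?_, ?_, ?_⟩
  · exact ⟨ClanPt R, clanTop R, ePt R, ePt_isEmbedding hz, two_of_tpc (clan_tpc hz) hz hR⟩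
  · intro X _ e he T
    have tpc := tpc_of_two he T
    exact ⟨tpc.compactSpace, tpc.semiregular, tpc.t0⟩
  · intro X _ e he T X₁ _ e₁ he₁ T₁
    exact (tpc_of_two he T).homeo (tpc_of_two he₁ T₁)
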